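/- For any representable clone (S, C), the category obtained by restricting the associated multicategory to linear (unary) multimaps carries a cartesian (finite product) structure: the n-ary product of X₁,…,Xₙ is ⊗ₙ(X₁,…,Xₙ), the projections are the πᵢ induced by representability, and the tupling of unary maps fᵢ : A → Xᵢ is ρ[f₁,…,fₙ]; these satisfy the universal property of the product in this category. -/

import Mathlib

/-!
STATEMENT 6: For a representable clone, the linear (unary) restriction carries finite
products: `⊗ₙ(X₁,…,Xₙ)` with projections `πᵢ` (induced by representability) and
tupling `⟨f₁,…,fₙ⟩ := ρ[f₁,…,fₙ]` satisfies the universal property of the product.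
-/

universe u v

structure Clone (S : Type u) where
  hom : ∀ {n : ℕ}, (Fin n → S) → S → Type v
  proj : ∀ {n : ℕ} (X : Fin n → S) (i : Fin n), hom X (X i)
  subst : ∀ {n m : ℕ} {X : Fin n → S} {Y : Fin m → S} {B : S},
    hom X B → (∀ i, hom Y (X i)) → hom Y B
  subst_proj : ∀ {n m : ℕ} (X : Fin n → S) (Y : Fin m → S) (i : Fin n)
    (g : ∀ j, hom Y (X j)), subst (proj X i) g = g i
  subst_id : ∀ {n : ℕ} {X : Fin n → S} {B : S} (f : hom X B),
    subst f (proj X) = f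
  subst_assoc : ∀ {n m k : ℕ} {X : Fin n → S} {Y : Fin m → S} {Z : Fin k → S} {B : S}
    (f : hom X B) (g : ∀ i, hom Y (X i)) (h : ∀ j, hom Z (Y j)),
    subst (subst f g) h = subst f (fun i => subst (g i) h)

def unCtx {S : Type u} (A : S) : Fin 1 → S := fun _ => A

structure RepClone (S : Type u) extends Clone S where
  tensor : ∀ {n : ℕ}, (Fin n → S) → S
  rho : ∀ {n : ℕ} (X : Fin n → S), hom X (tensor X)
  representable : ∀ {n : ℕ} (X : Fin n → S) (A : S),
    Function.Bijective (fun h : hom (unCtx (tensor X)) A => subst h (fun _ => rho X))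

/-- Composition in the linear restriction (the category of unary multimaps):
`g ∘ f := g[f]`. -/
def Clone.lcomp {S : Type u} (C : Clone S) {A B D : S}
    (g : C.hom (unCtx B) D) (f : C.hom (unCtx A) B) : C.hom (unCtx A) D :=
  C.subst g (fun _ => f)

/-- In the linear restriction of a representable clone, the object
`⊗ₙ(X₁,…,Xₙ)` is the `n`-ary product of `X₁,…,Xₙ`: there are projections `πᵢ`
(the unique extensions of the clone projections along `ρ`, i.e. `πᵢ[ρ] = pᵢ`) such
that for any unary maps `fᵢ : A → Xᵢ` the tupling `ρ[f₁,…,fₙ]` satisfies the universal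
property of the product: `πᵢ ∘ ρ[f₁,…,fₙ] = fᵢ`, and it is the unique such map. -/
theorem repClone_linear_restriction_products {S : Type u} (C : RepClone S) {n : ℕ}
    (X : Fin n → S) :
    ∃ π : ∀ i : Fin n, C.hom (unCtx (C.tensor X)) (X i),
      (∀ i, C.subst (π i) (fun _ => C.rho X) = C.proj X i) ∧
      ∀ (A : S) (f : ∀ i : Fin n, C.hom (unCtx A) (X i)),
        (∀ i, C.toClone.lcomp (π i) (C.subst (C.rho X) f) = f i) ∧
        (∀ g : C.hom (unCtx A) (C.tensor X),
          (∀ i, C.toClone.lcomp (π i) g = f i) → g = C.subst (C.rho X) f) := by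
  choose π hπ using fun i => (C.representable X (X i)).surjective (C.proj X i)
  have hπ' : ∀ i, C.subst (π i) (fun _ => C.rho X) = C.proj X i := hπ
  refine ⟨π, hπ', fun A f => ⟨fun i => ?_, fun g hg => ?_⟩⟩
  · show C.subst (π i) (fun _ => C.subst (C.rho X) f) = f i
    exact (C.subst_assoc (π i) (fun _ => C.rho X) f).symm.trans ((congrArg (fun h => C.subst h f) (hπ' i)).trans (C.subst_proj X (unCtx A) i f))
  · have hid : C.subst (C.rho X) π = C.proj (unCtx (C.tensor X)) 0 := by
      apply (C.representable X (C.tensor X)).injective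
      show C.subst (C.subst (C.rho X) π) (fun _ => C.rho X)
        = C.subst (C.proj (unCtx (C.tensor X)) 0) (fun _ => C.rho X)
      refine (C.subst_assoc _ _ _).trans (Eq.trans ?_ (C.subst_proj (unCtx (C.tensor X)) X 0 (fun _ => C.rho X)).symm)
      simp only [hπ']
      rw [C.subst_id]
    calc @Eq (C.hom (unCtx A) (C.tensor X)) g (C.subst (C.proj (unCtx (C.tensor X)) 0) (fun _ => g)) := by
            exact (C.subst_proj (unCtx (C.tensor X)) (unCtx A) 0 (fun _ => g)).symm
      _ = C.subst (C.subst (C.rho X) π) (fun _ => g) := by rw [hid]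
      _ = C.subst (C.rho X) (fun i => C.subst (π i) (fun _ => g)) := C.subst_assoc _ _ _
      _ = C.subst (C.rho X) f := congrArg _ (funext hg)
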